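/- For every positive integer s, d₄(21s + 5, 3) = 16s + 3; that is, there exists a quaternary Hermitian LCD [21s+5, 3] code with minimum weight 16s+3, and every quaternary Hermitian LCD [21s+5, 3] code has minimum weight at most 16s+3. -/

import Mathlib

open scoped Classical

noncomputable section

/-- The finite field with four elements. -/
abbrev F4 := GaloisField 2 2

/-- The (Hamming) weight of a vector over `F4`: the number of nonzero coordinates. -/
def wt {n : ℕ} (x : Fin n → F4) : ℕ :=
  (Finset.univ.filter (fun i => x i ≠ 0)).card

/-- Hermitian inner product on `F4^n`: `∑ i, x i * (conj (y i))` with `conj z = z^2`. -/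
def hermInner {n : ℕ} (x y : Fin n → F4) : F4 :=
  ∑ i, x i * (y i) ^ 2

/-- Membership in the Hermitian dual `C^{⊥H}` of a code `C`. -/
def inHermDual {n : ℕ} (C : Submodule F4 (Fin n → F4)) (x : Fin n → F4) : Prop :=
  ∀ y ∈ C, hermInner x y = 0

/-- `C` is Hermitian LCD: `C ∩ C^{⊥H} = {0}`. -/
def IsHermLCD {n : ℕ} (C : Submodule F4 (Fin n → F4)) : Prop :=
  ∀ x ∈ C, inHermDual C x → x = 0

/-- `C` has minimum weight (exactly) `d`. -/
def minWtIs {n : ℕ} (C : Submodule F4 (Fin n → F4)) (d : ℕ) : Prop :=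
  (∃ x ∈ C, x ≠ 0 ∧ wt x = d) ∧ ∀ x ∈ C, x ≠ 0 → d ≤ wt x

/-- `C` is a quaternary Hermitian LCD `[n,k,d]` code. -/
def IsHermLCDCode (n k d : ℕ) (C : Submodule F4 (Fin n → F4)) : Prop :=
  Module.finrank F4 C = k ∧ IsHermLCD C ∧ minWtIs C d

/-- `d₄(n,k) = d`: the largest minimum weight among quaternary Hermitian LCD `[n,k]` codes
is `d`. -/
def d4Is (n k d : ℕ) : Prop :=
  (∃ C : Submodule F4 (Fin n → F4), IsHermLCDCode n k d C) ∧
  (∀ C : Submodule F4 (Fin n → F4), Module.finrank F4 C = k → IsHermLCD C →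
    ∃ x ∈ C, x ≠ 0 ∧ wt x ≤ d)

end
/- ====================  Auxiliary development  ==================== -/

inductive K4 : Type
  | O | I | A | B
deriving DecidableEq

instance : Fintype K4 := ⟨⟨[K4.O, K4.I, K4.A, K4.B], by decide⟩, fun x => by cases x <;> decide⟩

namespace K4

def add : K4 → K4 → K4
  | O, x => x
  | x, O => x
  | I, I => O | I, A => B | I, B => A
  | A, I => B | A, A => O | A, B => I
  | B, I => A | B, A => I | B, B => O

def mul : K4 → K4 → K4
  | O, _ => O
  | _, O => O
  | I, x => x
  | x, I => x
  | A, A => B | A, B => I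
  | B, A => I | B, B => A

def inv' : K4 → K4
  | O => O | I => I | A => B | B => A

instance : Zero K4 := ⟨O⟩
instance : One K4 := ⟨I⟩
instance : Add K4 := ⟨add⟩
instance : Mul K4 := ⟨mul⟩
instance : Neg K4 := ⟨id⟩
instance : Inv K4 := ⟨inv'⟩

instance : CommRing K4 where
  add := add
  zero := O
  neg := id
  mul := mul
  one := I
  nsmul := nsmulRec
  zsmul := zsmulRec
  add_assoc := by decide
  zero_add := by decide
  add_zero := by decide
  add_comm := by decide
  neg_add_cancel := by decide
  mul_assoc := by decide
  one_mul := by decide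
  mul_one := by decide
  left_distrib := by decide
  right_distrib := by decide
  mul_comm := by decide
  zero_mul := by decide
  mul_zero := by decide

instance : Field K4 where
  inv := inv'
  exists_pair_ne := ⟨O, I, by decide⟩
  mul_inv_cancel := by decide
  inv_zero := by decide
  nnqsmul := _
  qsmul := _

/-- Columns of the simplex code (the 21 points of `PG(2,4)`). -/
def cols21 : Fin 21 → K4 × K4 × K4 :=
  ![(O, O, I), (O, I, O), (O, I, I), (O, I, A), (O, I, B), (I, O, O), (I, O, I),
    (I, O, A), (I, O, B), (I, I, O), (I, I, I), (I, I, A), (I, I, B), (I, A, O),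
    (I, A, I), (I, A, A), (I, A, B), (I, B, O), (I, B, I), (I, B, A), (I, B, B)]

/-- Columns of a `[26,3,19]` code with nonsingular Hermitian Gram matrix. -/
def cols26 : Fin 26 → K4 × K4 × K4 :=
  ![(O, O, I), (O, O, I), (O, I, O), (O, I, I), (O, I, A), (O, I, A), (O, I, B),
    (I, O, O), (I, O, I), (I, O, A), (I, O, B), (I, I, O), (I, I, I), (I, I, I),
    (I, I, A), (I, I, B), (I, A, O), (I, A, O), (I, A, I), (I, A, A), (I, A, B),
    (I, B, O), (I, B, I), (I, B, I), (I, B, B), (I, B, B)]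

def proj3 : Fin 3 → (K4 × K4 × K4) → K4 := ![fun p => p.1, fun p => p.2.1, fun p => p.2.2]

def dot (m p : K4 × K4 × K4) : K4 := m.1 * p.1 + m.2.1 * p.2.1 + m.2.2 * p.2.2

def w21 (m : K4 × K4 × K4) : ℕ := (Finset.univ.filter (fun j => dot m (cols21 j) ≠ 0)).card
def w26 (m : K4 × K4 × K4) : ℕ := (Finset.univ.filter (fun j => dot m (cols26 j) ≠ 0)).card

set_option maxRecDepth 40000

theorem S1 : ∀ m : K4 × K4 × K4, m ≠ (O, O, O) → w21 m = 16 := by decide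
theorem S2 : ∀ m : K4 × K4 × K4, m ≠ (O, O, O) → 19 ≤ w26 m := by decide
theorem S3 : w26 (O, I, I) = 19 := by decide
theorem S4 : ∀ (m : K4 × K4 × K4) (i : Fin 3),
    ∑ j : Fin 21, dot m (cols21 j) * (proj3 i (cols21 j)) ^ 2 = 0 := by decide
theorem S5 : ∀ m : K4 × K4 × K4,
    (∀ i : Fin 3, ∑ j : Fin 26, dot m (cols26 j) * (proj3 i (cols26 j)) ^ 2 = 0) →
    m = (O, O, O) := by decide
theorem dot_unit : ∀ (k : Fin 3) (p : K4 × K4 × K4),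
    dot (proj3 k (I,O,O), proj3 k (O,I,O), proj3 k (O,O,I)) p = proj3 k p := by decide

end K4
noncomputable section Transport

set_option maxRecDepth 8000

open Finset

noncomputable instance instFintypeF4 : Fintype F4 := Fintype.ofFinite F4

lemma F4_card : Fintype.card F4 = 4 := by
  have := GaloisField.card 2 2 (by norm_num)
  simpa [Nat.card_eq_fintype_card] using this

/-- A ring isomorphism from the concrete field `K4` to `F4`. -/
noncomputable def φ : K4 ≃+* F4 :=
  FiniteField.ringEquivOfCardEq (by rw [F4_card]; decide)

lemma φ_zero : φ K4.O = 0 := map_zero φ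

lemma φ_eq_zero_iff {x : K4} : φ x = 0 ↔ x = K4.O :=
  ⟨fun h => φ.injective (h.trans (map_zero φ).symm), fun h => h ▸ map_zero φ⟩

/-- message triple as a vector over F4 -/
def vmap (m : K4 × K4 × K4) : Fin 3 → F4 := ![φ m.1, φ m.2.1, φ m.2.2]

lemma vmap_surj (v : Fin 3 → F4) : ∃ m, vmap m = v := by
  refine ⟨(φ.symm (v 0), φ.symm (v 1), φ.symm (v 2)), funext fun k => ?_⟩
  fin_cases k <;> simp [vmap]

lemma vmap_zero : vmap (K4.O, K4.O, K4.O) = 0 := by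
  funext k; fin_cases k <;> simp [vmap, φ_zero]

theorem existsCode (s : ℕ) (hs : 1 ≤ s) :
    ∃ C : Submodule F4 (Fin (21 * s + 5) → F4), IsHermLCDCode (21 * s + 5) 3 (16 * s + 3) C := by
  classical
  have hcard : Fintype.card ((Fin (s-1) × Fin 21) ⊕ Fin 26) = 21 * s + 5 := by
    simp only [Fintype.card_sum, Fintype.card_prod, Fintype.card_fin]
    omega
  let e : ((Fin (s-1) × Fin 21) ⊕ Fin 26) ≃ Fin (21 * s + 5) := Fintype.equivFinOfCardEq hcard
  let colI : ((Fin (s-1) × Fin 21) ⊕ Fin 26) → K4 × K4 × K4 :=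
    Sum.elim (fun x => K4.cols21 x.2) K4.cols26
  let col : Fin (21 * s + 5) → K4 × K4 × K4 := fun i => colI (e.symm i)
  let E : (Fin 3 → F4) →ₗ[F4] (Fin (21 * s + 5) → F4) :=
    { toFun := fun v i => v 0 * φ (col i).1 + v 1 * φ (col i).2.1 + v 2 * φ (col i).2.2
      map_add' := by intro v w; funext i; simp only [Pi.add_apply]; ring
      map_smul' := by intro a v; funext i; simp only [Pi.smul_apply, smul_eq_mul,
        RingHom.id_apply]; ring }
  -- codeword entries
  have hE : ∀ (m : K4 × K4 × K4) (i : Fin (21 * s + 5)),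
      E (vmap m) i = φ (K4.dot m (col i)) := by
    intro m i
    have e0 : vmap m 0 = φ m.1 := rfl
    have e1 : vmap m 1 = φ m.2.1 := rfl
    have e2 : vmap m 2 = φ m.2.2 := rfl
    show vmap m 0 * _ + vmap m 1 * _ + vmap m 2 * _ = _
    rw [e0, e1, e2, K4.dot, map_add, map_add, map_mul, map_mul, map_mul]
  -- weights
  have hwt : ∀ m : K4 × K4 × K4, wt (E (vmap m)) = (s-1) * K4.w21 m + K4.w26 m := by
    intro m
    have h1 : wt (E (vmap m)) = ∑ i : Fin (21 * s + 5),
        (fun t => if K4.dot m (colI t) ≠ 0 then 1 else 0) (e.symm i) := by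
      rw [wt, Finset.card_filter]
      refine Finset.sum_congr rfl fun i _ => ?_
      refine if_congr ?_ rfl rfl
      rw [hE m i, not_iff_not, φ_eq_zero_iff]; rfl
    rw [h1, Equiv.sum_comp e.symm (fun t => if K4.dot m (colI t) ≠ 0 then 1 else 0),
      Fintype.sum_sum_type, Fintype.sum_prod_type]
    have h4a : ∀ a : Fin (s-1),
        (∑ j : Fin 21, if K4.dot m (colI (Sum.inl (a, j))) ≠ 0 then 1 else 0) = K4.w21 m :=
      fun a => (Finset.card_filter _ _).symm
    have h4b : (∑ j : Fin 26, if K4.dot m (colI (Sum.inr j)) ≠ 0 then 1 else 0) = K4.w26 m :=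
      (Finset.card_filter _ _).symm
    rw [Finset.sum_congr rfl (fun a _ => h4a a), h4b, Finset.sum_const, smul_eq_mul,
      Finset.card_univ, Fintype.card_fin]
  -- the three generators
  let u : Fin 3 → K4 × K4 × K4 := fun k =>
    (K4.proj3 k (.I,.O,.O), K4.proj3 k (.O,.I,.O), K4.proj3 k (.O,.O,.I))
  -- Hermitian inner products with the generators
  have hherm : ∀ (m : K4 × K4 × K4) (k : Fin 3),
      hermInner (E (vmap m)) (E (vmap (u k))) =
        φ (∑ j : Fin 26, K4.dot m (K4.cols26 j) * (K4.proj3 k (K4.cols26 j)) ^ 2) := by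
    intro m k
    have h1 : ∀ i, E (vmap m) i * (E (vmap (u k)) i) ^ 2 =
        (fun t => φ (K4.dot m (colI t) * (K4.proj3 k (colI t)) ^ 2)) (e.symm i) := by
      intro i
      rw [hE, hE, ← map_pow, ← map_mul]
      exact congrArg φ (by rw [K4.dot_unit k (col i)])
    rw [hermInner]
    simp only [h1]
    rw [Equiv.sum_comp e.symm (fun t => φ (K4.dot m (colI t) * (K4.proj3 k (colI t)) ^ 2))]
    rw [Fintype.sum_sum_type, Fintype.sum_prod_type]
    have h2 : ∀ a : Fin (s-1), (∑ j : Fin 21,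
        φ (K4.dot m (colI (Sum.inl (a, j))) * (K4.proj3 k (colI (Sum.inl (a, j)))) ^ 2)) = 0 := by
      intro a
      have : (∑ j : Fin 21,
          φ (K4.dot m (K4.cols21 j) * (K4.proj3 k (K4.cols21 j)) ^ 2)) = 0 := by
        rw [← map_sum, K4.S4 m k, map_zero]
      exact this
    rw [Finset.sum_congr rfl fun a _ => h2 a, Finset.sum_const, smul_zero, zero_add, ← map_sum]
    rfl
  -- injectivity of the encoder
  have hker : ∀ v : Fin 3 → F4, E v = 0 → v = 0 := by
    intro v hv
    obtain ⟨m, rfl⟩ := vmap_surj v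
    by_cases hm : m = (K4.O, K4.O, K4.O)
    · rw [hm, vmap_zero]
    · exfalso
      have hz : ∀ j : Fin 26, K4.dot m (K4.cols26 j) = 0 := by
        intro j
        have h0 : E (vmap m) (e (Sum.inr j)) = 0 := by rw [hv]; rfl
        rw [hE] at h0
        have : col (e (Sum.inr j)) = K4.cols26 j := by
          show colI (e.symm (e (Sum.inr j))) = _
          rw [Equiv.symm_apply_apply]
          rfl
        rw [this] at h0
        exact φ_eq_zero_iff.mp h0
      have : K4.w26 m = 0 := by
        rw [K4.w26, Finset.card_eq_zero, Finset.filter_eq_empty_iff]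
        intro j _
        simp only [not_not]
        exact hz j
      have := K4.S2 m hm
      omega
  have hinj : Function.Injective E := by
    intro v w h
    have : E (v - w) = 0 := by rw [map_sub, h, sub_self]
    have := hker _ this
    exact sub_eq_zero.mp this
  -- the code
  refine ⟨LinearMap.range E, ?_, ?_, ?_⟩
  · rw [LinearMap.finrank_range_of_inj hinj, Module.finrank_fintype_fun_eq_card,
      Fintype.card_fin]
  · -- Hermitian LCD
    intro x hx hdual
    obtain ⟨v, rfl⟩ := hx
    obtain ⟨m, rfl⟩ := vmap_surj v
    have hm : m = (K4.O, K4.O, K4.O) := by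
      apply K4.S5
      intro k
      have hk : E (vmap (u k)) ∈ LinearMap.range E := ⟨vmap (u k), rfl⟩
      have := hdual _ hk
      rw [hherm m k] at this
      exact φ_eq_zero_iff.mp this
    rw [hm, vmap_zero, map_zero]
  · -- minimum weight
    constructor
    · refine ⟨E (vmap (K4.O, K4.I, K4.I)), ⟨_, rfl⟩, ?_, ?_⟩
      · intro h0
        have := hwt (K4.O, K4.I, K4.I)
        rw [h0] at this
        have hz : wt (0 : Fin (21 * s + 5) → F4) = 0 := by
          rw [wt, Finset.card_eq_zero, Finset.filter_eq_empty_iff]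
          intro i _
          simp
        rw [hz, K4.S1 _ (by decide), K4.S3] at this
        omega
      · rw [hwt, K4.S1 _ (by decide), K4.S3]
        omega
    · intro x hx hx0
      obtain ⟨v, rfl⟩ := hx
      obtain ⟨m, rfl⟩ := vmap_surj v
      have hm : m ≠ (K4.O, K4.O, K4.O) := by
        intro h
        rw [h, vmap_zero, map_zero] at hx0
        exact hx0 rfl
      have h1 := hwt m
      rw [K4.S1 m hm] at h1
      have h3 := K4.S2 m hm
      omega

end Transport
theorem upperBound {n : ℕ} (C : Submodule F4 (Fin n → F4))
    (h3 : Module.finrank F4 C = 3) :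
    ∃ x ∈ C, x ≠ 0 ∧ 63 * wt x ≤ 48 * n := by
  classical
  haveI : Fintype C := Fintype.ofFinite C
  have hcardC : Fintype.card C = 64 := by
    rw [Module.card_eq_pow_finrank (K := F4) (V := C), F4_card, h3]
    norm_num
  -- each coordinate functional has a kernel of size at least 16
  have hcoord : ∀ i : Fin n,
      (Finset.univ.filter (fun x : C => ¬ (x : Fin n → F4) i = 0)).card ≤ 48 := by
    intro i
    set ψ : C →ₗ[F4] F4 := (LinearMap.proj i).comp C.subtype with hψ
    haveI : Fintype (LinearMap.ker ψ) := Fintype.ofFinite _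
    have h1 := LinearMap.finrank_range_add_finrank_ker ψ
    rw [h3] at h1
    have h2 : Module.finrank F4 (LinearMap.range ψ) ≤ 1 := by
      have := Submodule.finrank_le (LinearMap.range ψ)
      simpa [Module.finrank_self] using this
    have hk : 2 ≤ Module.finrank F4 (LinearMap.ker ψ) := by omega
    have hkcard : 16 ≤ Fintype.card (LinearMap.ker ψ) := by
      rw [Module.card_eq_pow_finrank (K := F4) (V := LinearMap.ker ψ), F4_card]
      calc (16:ℕ) = 4 ^ 2 := by norm_num
      _ ≤ 4 ^ Module.finrank F4 (LinearMap.ker ψ) :=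
        Nat.pow_le_pow_right (by norm_num) hk
    have hzero : (Finset.univ.filter (fun x : C => (x : Fin n → F4) i = 0)).card
        = Fintype.card (LinearMap.ker ψ) := by
      rw [← Fintype.card_subtype]
      refine Fintype.card_congr (Equiv.subtypeEquivRight fun x => ?_).symm
      rw [LinearMap.mem_ker, hψ]
      rfl
    have hsplit := Finset.card_filter_add_card_filter_not
      (s := Finset.univ) (p := fun x : C => (x : Fin n → F4) i = 0)
    rw [Finset.card_univ, hcardC, hzero] at hsplit
    omega
  -- double counting
  have hsum : (∑ x : C, wt (x : Fin n → F4)) ≤ 48 * n := by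
    have h1 : ∀ x : C, wt (x : Fin n → F4)
        = ∑ i : Fin n, if ¬ (x : Fin n → F4) i = 0 then 1 else 0 :=
      fun x => Finset.card_filter _ _
    rw [Finset.sum_congr rfl fun x _ => h1 x, Finset.sum_comm]
    have h2 : ∀ i : Fin n,
        (∑ x : C, if ¬ (x : Fin n → F4) i = 0 then 1 else 0) ≤ 48 :=
      fun i => le_of_eq_of_le (Finset.card_filter _ _).symm (hcoord i)
    calc (∑ i : Fin n, ∑ x : C, if ¬ (x : Fin n → F4) i = 0 then 1 else 0)
        ≤ ∑ _i : Fin n, 48 := Finset.sum_le_sum fun i _ => h2 i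
      _ = 48 * n := by rw [Finset.sum_const, smul_eq_mul, Finset.card_univ,
            Fintype.card_fin, mul_comm]
  -- the nonzero codewords
  have hone : (Finset.univ.filter (fun x : C => x = 0)).card = 1 := by
    have : (Finset.univ.filter (fun x : C => x = 0)) = {0} := by
      ext x
      simp
    rw [this, Finset.card_singleton]
  have hsplit := Finset.card_filter_add_card_filter_not
    (s := Finset.univ) (p := fun x : C => x = 0)
  rw [Finset.card_univ, hcardC, hone] at hsplit
  by_contra hcon
  push_neg at hcon
  have hbig : ∀ x ∈ Finset.univ.filter (fun x : C => ¬ x = 0),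
      48 * n + 1 ≤ 63 * wt (x : Fin n → F4) := by
    intro x hx
    rw [Finset.mem_filter] at hx
    have hxC : (x : Fin n → F4) ∈ C := x.2
    have hx0 : (x : Fin n → F4) ≠ 0 := by
      intro h
      exact hx.2 (Subtype.ext h)
    have := hcon _ hxC hx0
    omega
  have hA := Finset.card_nsmul_le_sum (Finset.univ.filter (fun x : C => ¬ x = 0))
    (fun x => 63 * wt (x : Fin n → F4)) (48 * n + 1) hbig
  rw [smul_eq_mul, ← Finset.mul_sum] at hA
  have hcard63 : (Finset.univ.filter (fun x : C => ¬ x = 0)).card = 63 := by omega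
  rw [hcard63] at hA
  have hA' : 48 * n + 1 ≤ ∑ x ∈ Finset.univ.filter (fun x : C => ¬ x = 0),
      wt (x : Fin n → F4) := Nat.le_of_mul_le_mul_left hA (by norm_num)
  have hB : (∑ x ∈ Finset.univ.filter (fun x : C => ¬ x = 0), wt (x : Fin n → F4))
      ≤ ∑ x : C, wt (x : Fin n → F4) :=
    Finset.sum_le_sum_of_subset (Finset.filter_subset _ _)
  omega
/-- `d₄(21s+5, 3) = 16s+3` for every positive integer `s`. -/
theorem stmt15 (s : ℕ) (hs : 1 ≤ s) : d4Is (21 * s + 5) 3 (16 * s + 3) := by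
  constructor
  · exact existsCode s hs
  · intro C h3 _
    obtain ⟨x, hxC, hx0, hx⟩ := upperBound C h3
    exact ⟨x, hxC, hx0, by omega⟩
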